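/- Let q ≥ 3 and k ≥ 2 be integers, and let γ be the dominant root of Φ_{q,k}, i.e. the unique real root of Φ_{q,k}(t) = t^k − q t^{k−1} − t^{k−2} − ⋯ − t − 1 in (q, q+1). Then for all integers n ≥ −(k−2), |F^{(k)}_{q,n} − g_{q,k}(γ)·γ^n| ≤ 1/q, where g_{q,k}(x) = (x−1)/((k+1)x² − (q+1)kx + (q−1)(k−1)). -/

import Mathlib

private lemma aux3m : ∀ m : ℕ, 1 ≤ m → 3 * m ≤ 3 ^ m := by
  intro m hm
  induction m with
  | zero => omega
  | succ n ih =>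
    rcases Nat.eq_or_lt_of_le hm with h | h
    · simp [← h]
    · have hn : 1 ≤ n := by omega
      have h1 := ih hn
      have h3 : 3 ≤ 3 ^ n := by
        calc 3 = 3 ^ 1 := rfl
        _ ≤ 3 ^ n := Nat.pow_le_pow_right (by norm_num) hn
      calc 3 * (n + 1) = 3 * n + 3 := by ring
      _ ≤ 3 ^ n + 3 ^ n := by omega
      _ ≤ 3 ^ (n + 1) := by rw [pow_succ]; omega


private lemma qk_ineq_block (q γ K P gd : ℝ)
    (hq3 : (3 : ℝ) ≤ q) (hγ_lb : q < γ) (hγ_ub : γ < q + 1) (hK2 : (2:ℝ) ≤ K)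
    (hPpos : 0 < P) (hP3 : (3:ℝ) < P) (hP3k : 3 * (K - 1) ≤ P)
    (hKI : (γ - q) * P * (γ - 1) = P - 1)
    (hgdP : gd * P = (2 * γ ^ 2 - (q + 1) * γ) * P - (K - 1)) :
    q*(γ-1) ≤ gd ∧ γ*(γ-1) ≤ gd ∧ q * (gd - γ*(γ-1)) ≤ gd := by
  have hγ3 : (3:ℝ) < γ := by linarith
  have hγ1' : (0:ℝ) < γ - 1 := by linarith
  have key3 : (2*γ^2 - (2*q+1)*γ + q) * P * (γ - 1) = (2*γ - 1) * (P - 1) := by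
    linear_combination (2*γ - 1) * hKI
  have key4 : (γ^2 - q*γ)*P*(γ-1) = γ*(P-1) := by linear_combination γ * hKI
  have hint1 : (0:ℝ) ≤ (P - 3*(K-1)) * (γ - 1) :=
    mul_nonneg (by linarith) (by linarith)
  refine ⟨?_, ?_, ?_⟩
  · have h5 : (K-1)*(γ-1) ≤ (2*γ-1)*(P-1) := by
      nlinarith [mul_nonneg (by linarith : (0:ℝ) ≤ P - 3) (by linarith : (0:ℝ) ≤ 5*γ - 2)]
    have h6 : (K-1) * (γ-1) ≤ ((2*γ^2 - (2*q+1)*γ + q) * P) * (γ-1) := by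
      rw [key3]; exact h5
    have h6' : (K-1) ≤ (2*γ^2 - (2*q+1)*γ + q) * P := le_of_mul_le_mul_right h6 hγ1'
    have h7 : q*(γ-1)*P ≤ gd*P := by nlinarith [h6', hgdP]
    exact le_of_mul_le_mul_right h7 hPpos
  · have h5' : (K-1)*(γ-1) ≤ γ*(P-1) := by nlinarith
    have h6b : (K-1)*(γ-1) ≤ ((γ^2 - q*γ)*P)*(γ-1) := by rw [key4]; exact h5'
    have h6b' : (K-1) ≤ (γ^2 - q*γ)*P := le_of_mul_le_mul_right h6b hγ1'
    have h7 : γ*(γ-1)*P ≤ gd*P := by nlinarith [h6b', hgdP]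
    exact le_of_mul_le_mul_right h7 hPpos
  · have hnum : (gd - γ*(γ-1))*P = (γ^2 - q*γ)*P - (K-1) := by
      linear_combination hgdP
    have e1 : q*(gd - γ*(γ-1))*(P*(γ-1)) = q*(γ*(P-1) - (K-1)*(γ-1)) := by
      linear_combination q*(γ-1)*hnum + q*key4
    have s2 : q*(γ*(P-1) - (K-1)*(γ-1)) ≤ q*γ*P := by
      nlinarith [mul_nonneg (mul_nonneg (by linarith : (0:ℝ) ≤ q) (by linarith : (0:ℝ) ≤ K-1)) hγ1'.le,
        mul_nonneg (by linarith : (0:ℝ) ≤ q) (by linarith : (0:ℝ) ≤ γ)]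
    have s5 : q*γ*P ≤ (2*γ*P - P/3)*(γ-1) := by
      have base : q*γ ≤ (2*γ - 1/3)*(γ-1) := by nlinarith
      have := mul_le_mul_of_nonneg_left base hPpos.le
      nlinarith [this]
    have s3 : 2*γ ≤ 2*γ^2 - (q+1)*γ := by nlinarith
    have s3' : 2*γ*P ≤ (2*γ^2 - (q+1)*γ)*P := mul_le_mul_of_nonneg_right s3 hPpos.le
    have s6 : 2*γ*P - P/3 ≤ (2*γ^2 - (q+1)*γ)*P - (K-1) := by linarith
    have s7 : (2*γ*P - P/3)*(γ-1) ≤ ((2*γ^2 - (q+1)*γ)*P - (K-1))*(γ-1) :=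
      mul_le_mul_of_nonneg_right s6 hγ1'.le
    have s8 : gd*(P*(γ-1)) = ((2*γ^2 - (q+1)*γ)*P - (K-1))*(γ-1) := by
      linear_combination (γ-1)*hgdP
    have hmain : q*(gd - γ*(γ-1))*(P*(γ-1)) ≤ gd*(P*(γ-1)) := by
      rw [e1, s8]; linarith
    exact le_of_mul_le_mul_right hmain (mul_pos hPpos hγ1')

/-- For integers `q ≥ 3` and `k ≥ 2`, with `γ` the dominant root of
`Φ_{q,k}` (its unique real root in `(q, q+1)`), one has
`|F n − g(γ)·γ^n| ≤ 1/q` for all integers `n ≥ −(k−2)`. -/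
theorem qk_fib_error_bound
    (q : ℤ) (k : ℕ) (hq : 3 ≤ q) (hk : 2 ≤ k)
    (F : ℤ → ℝ)
    (hF0 : ∀ n : ℤ, 2 - (k : ℤ) ≤ n → n ≤ 0 → F n = 0)
    (hF1 : F 1 = 1)
    (hFrec : ∀ n : ℤ, 2 ≤ n →
      F n = (q : ℝ) * F (n - 1) + ∑ i ∈ Finset.Icc 2 k, F (n - (i : ℤ)))
    (γ : ℝ)
    (hγ_lb : (q : ℝ) < γ) (hγ_ub : γ < (q : ℝ) + 1)
    (hγ_root : γ ^ k - (q : ℝ) * γ ^ (k - 1) - ∑ i ∈ Finset.range (k - 1), γ ^ i = 0)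
    (g : ℝ → ℝ)
    (hg : ∀ x : ℝ, g x = (x - 1) /
      (((k : ℝ) + 1) * x ^ 2 - ((q : ℝ) + 1) * (k : ℝ) * x + ((q : ℝ) - 1) * ((k : ℝ) - 1))) :
    ∀ n : ℤ, 2 - (k : ℤ) ≤ n → |F n - g γ * γ ^ n| ≤ 1 / (q : ℝ) := by
  have hkk1 : 1 ≤ k - 1 := by omega
  have hq3 : (3 : ℝ) ≤ (q : ℝ) := by exact_mod_cast hq
  have hγ3 : (3 : ℝ) < γ := lt_of_le_of_lt hq3 hγ_lb
  have hγ0 : (0 : ℝ) < γ := by linarith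
  have hγ1 : (1 : ℝ) < γ := by linarith
  have hγne : γ ≠ 0 := ne_of_gt hγ0
  have hγne1 : γ ≠ 1 := ne_of_gt hγ1
  have hγ1' : (0:ℝ) < γ - 1 := by linarith
  have hq0 : (0 : ℝ) < (q : ℝ) := by linarith
  set K : ℝ := (k : ℝ) with hK
  have hK2 : (2 : ℝ) ≤ K := by rw [hK]; exact_mod_cast hk
  set P : ℝ := γ ^ (k - 1) with hP
  have hPpos : 0 < P := pow_pos hγ0 _
  have hPγ : γ ≤ P := by
    calc γ = γ ^ 1 := (pow_one γ).symm
    _ ≤ γ ^ (k - 1) := pow_le_pow_right₀ hγ1.le hkk1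
  have hP3 : (3 : ℝ) < P := lt_of_lt_of_le hγ3 hPγ
  have hcastk1 : ((k - 1 : ℕ) : ℝ) = K - 1 := by
    rw [hK, Nat.cast_sub (by omega : 1 ≤ k)]; norm_num
  have hcastk1' : ((k - 1 : ℕ) : ℤ) = (k : ℤ) - 1 := by omega
  have hP3k : 3 * (K - 1) ≤ P := by
    have h1 : ((3 : ℝ)) ^ (k - 1) ≤ P := pow_le_pow_left₀ (by norm_num) hγ3.le _
    have h2 : (3 : ℝ) * ((k - 1 : ℕ) : ℝ) ≤ (3 : ℝ) ^ (k - 1) := by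
      have h := aux3m (k - 1) hkk1
      calc (3 : ℝ) * ((k - 1 : ℕ) : ℝ) = ((3 * (k - 1) : ℕ) : ℝ) := by push_cast; ring
      _ ≤ ((3 ^ (k - 1) : ℕ) : ℝ) := by exact_mod_cast h
      _ = (3 : ℝ) ^ (k - 1) := by push_cast; ring
    rw [hcastk1] at h2
    linarith
  have hγk : γ ^ k = γ * P := by
    conv_lhs => rw [show k = (k - 1) + 1 by omega]
    rw [pow_succ']
  have hgeom : ∑ i ∈ Finset.range (k - 1), γ ^ i = (P - 1) / (γ - 1) := geom_sum_eq hγne1 _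
  have hKI : (γ - q) * P * (γ - 1) = P - 1 := by
    have h := hγ_root
    rw [hgeom, hγk] at h
    field_simp at h
    linarith
  have hA : (γ ^ 2 - ((q : ℝ) + 1) * γ + (q : ℝ) - 1) * P = -1 := by linear_combination hKI
  -- the denominator of g
  set gd : ℝ := (K + 1) * γ ^ 2 - ((q : ℝ) + 1) * K * γ + ((q : ℝ) - 1) * (K - 1) with hgd
  have hgdP : gd * P = (2 * γ ^ 2 - ((q : ℝ) + 1) * γ) * P - (K - 1) := by
    linear_combination (K - 1) * hA
  have hgd_pos : 0 < gd := by
    have h1 : (2 * γ ^ 2 - ((q : ℝ) + 1) * γ) ≥ 2 * γ := by nlinarith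
    nlinarith [hgdP, hP3k, hPpos]
  have hgd_ne : gd ≠ 0 := ne_of_gt hgd_pos
  have hggd : g γ * gd = γ - 1 := by
    rw [hg, ← hgd]; field_simp
  have hgval : g γ = (γ - 1) / gd := by rw [hg]
  clear_value K P gd
  obtain ⟨hg_le, hgγ_le1, h1gγ_le⟩ :=
    qk_ineq_block (q:ℝ) γ K P gd hq3 hγ_lb hγ_ub hK2 hPpos hP3 hP3k hKI hgdP
  -- consequences about g γ
  have hg_pos : 0 < g γ := by
    rw [hgval]; exact div_pos (by linarith) hgd_pos
  have hgval_le : g γ ≤ 1 / q := by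
    rw [hgval, div_le_div_iff₀ hgd_pos hq0]
    linarith
  have hgγle : g γ * γ ≤ 1 := by
    have : g γ * γ * gd ≤ 1 * gd := by
      calc g γ * γ * gd = γ * (g γ * gd) := by ring
      _ = γ * (γ - 1) := by rw [hggd]
      _ ≤ gd := hgγ_le1
      _ = 1 * gd := (one_mul gd).symm
    exact le_of_mul_le_mul_right this hgd_pos
  have h1gγle : 1 - g γ * γ ≤ 1 / q := by
    have h : (1 - g γ * γ) * (gd * q) ≤ (1/q) * (gd * q) := by
      have e : (1 - g γ * γ) * (gd * q) = (q:ℝ) * (gd - γ*(γ-1)) := by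
        have : g γ * γ * gd = γ * (γ-1) := by
          calc g γ * γ * gd = γ * (g γ * gd) := by ring
          _ = γ * (γ - 1) := by rw [hggd]
        linear_combination -(q:ℝ) * this
      have e2 : (1/(q:ℝ)) * (gd * q) = gd := by field_simp
      rw [e, e2]; exact h1gγ_le
    exact le_of_mul_le_mul_right h (mul_pos hgd_pos hq0)
  -- reindexing of the recurrence sum
  have hreindex : ∀ (f : ℤ → ℝ) (m : ℤ),
      ∑ i ∈ Finset.Icc 2 k, f (m - (i:ℤ)) = ∑ j ∈ Finset.range (k-1), f (m - k + (j:ℤ)) := by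
    intro f m
    apply Finset.sum_nbij' (i := fun i => k - i) (j := fun j => k - j)
    · intro a ha; simp only [Finset.mem_Icc] at ha; simp only [Finset.mem_range]; omega
    · intro a ha; simp only [Finset.mem_range] at ha; simp only [Finset.mem_Icc]; omega
    · intro a ha; simp only [Finset.mem_Icc] at ha; omega
    · intro a ha; simp only [Finset.mem_range] at ha; omega
    · intro a ha; simp only [Finset.mem_Icc] at ha
      congr 1
      have : ((k - a : ℕ) : ℤ) = (k:ℤ) - a := by omega
      rw [this]; ring
  have hzp : ∀ a b : ℤ, γ ^ a * γ ^ b = γ ^ (a+b) := fun a b => (zpow_add₀ hγne a b).symm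
  have hγrec : ∀ n : ℤ, γ ^ n = (q:ℝ) * γ ^ (n-1) + ∑ i ∈ Finset.Icc 2 k, γ ^ (n - (i:ℤ)) := by
    intro n
    rw [hreindex (fun m => γ ^ m) n]
    have step1 : ∀ j ∈ Finset.range (k-1), γ ^ (n - k + (j:ℤ)) = γ ^ (n - k) * γ ^ (j:ℕ) := by
      intro j hj
      rw [← zpow_natCast γ j, hzp]
    rw [Finset.sum_congr rfl step1, ← Finset.mul_sum]
    have hsum : ∑ i ∈ Finset.range (k - 1), γ ^ i = γ ^ k - (q:ℝ) * P := by linarith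
    rw [hsum]
    symm
    have e1 : γ ^ (n - (k:ℤ)) * γ ^ (k:ℕ) = γ ^ n := by
      rw [← zpow_natCast γ k, hzp]; congr 1; ring
    have e2 : γ ^ (n - (k:ℤ)) * P = γ ^ (n - 1) := by
      rw [hP, ← zpow_natCast γ (k-1), hzp]; congr 1; omega
    calc (q:ℝ) * γ ^ (n-1) + γ ^ (n - (k:ℤ)) * (γ ^ k - (q:ℝ)*P)
        = (q:ℝ) * γ ^ (n-1) + (γ ^ (n - (k:ℤ)) * γ ^ (k:ℕ)) - (q:ℝ) * (γ ^ (n-(k:ℤ)) * P) := by ring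
      _ = γ ^ n := by rw [e1, e2]; ring
  -- the error sequence
  set c : ℝ := g γ with hc
  set E : ℤ → ℝ := fun n => F n - c * γ ^ n with hE
  have hErec : ∀ n : ℤ, 2 ≤ n → E n = (q:ℝ) * E (n-1) + ∑ i ∈ Finset.Icc 2 k, E (n - (i:ℤ)) := by
    intro n hn
    simp only [hE]
    rw [hFrec n hn, Finset.sum_sub_distrib, ← Finset.mul_sum]
    linear_combination (-c) * hγrec n
  -- four-term recurrence
  have h4 : ∀ n : ℤ, 2 - (k:ℤ) ≤ n →
      E (n + k + 1) = ((q:ℝ)+1) * E (n + k) - ((q:ℝ)-1) * E (n + k - 1) - E n := by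
    intro n hn
    have ha := hErec (n + k + 1) (by omega)
    have hb := hErec (n + k) (by omega)
    rw [hreindex E (n + k + 1)] at ha
    rw [hreindex E (n + k)] at hb
    rw [show n + (k:ℤ) + 1 - 1 = n + k from by ring] at ha
    rw [show n + (k:ℤ) - 1 = n + k - 1 from by ring] at hb
    have ha' : ∑ j ∈ Finset.range (k-1), E (n + (k:ℤ) + 1 - k + (j:ℤ))
        = ∑ j ∈ Finset.range (k-1), E (n + 1 + (j:ℤ)) :=
      Finset.sum_congr rfl (fun j _ => by congr 1; ring)
    have hb' : ∑ j ∈ Finset.range (k-1), E (n + (k:ℤ) - k + (j:ℤ))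
        = ∑ j ∈ Finset.range (k-1), E (n + (j:ℤ)) :=
      Finset.sum_congr rfl (fun j _ => by congr 1; ring)
    rw [ha'] at ha
    rw [hb'] at hb
    have ht := Finset.sum_range_sub (f := fun j : ℕ => E (n + (j:ℤ))) (k-1)
    rw [Finset.sum_sub_distrib] at ht
    have ht1 : ∑ j ∈ Finset.range (k-1), E (n + ((j+1 : ℕ) : ℤ))
        = ∑ j ∈ Finset.range (k-1), E (n + 1 + (j:ℤ)) :=
      Finset.sum_congr rfl (fun j _ => by congr 1; push_cast; ring)
    have ht2 : E (n + ((k - 1 : ℕ) : ℤ)) = E (n + k - 1) := by rw [hcastk1']; congr 1; ring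
    have ht3 : E (n + ((0:ℕ):ℤ)) = E n := by norm_num
    rw [ht1, ht2, ht3] at ht
    linarith
  -- coefficient identity
  have hPne : P ≠ 0 := hPpos.ne'
  have hcoeff : ((q:ℝ)+1-γ)*γ - ((q:ℝ)-1) = P⁻¹ := by
    field_simp
    linear_combination -hA
  -- weighted telescoping
  have hAB : ∀ n : ℤ,
      (∑ j ∈ Finset.range (k-1), γ ^ (-1 - (j:ℤ)) * E (n + 1 + (j:ℤ)))
        - γ * (∑ j ∈ Finset.range (k-1), γ ^ (-1 - (j:ℤ)) * E (n + (j:ℤ)))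
      = P⁻¹ * E (n + k - 1) - E n := by
    intro n
    have ht := Finset.sum_range_sub (f := fun j : ℕ => γ ^ (-(j:ℤ)) * E (n + (j:ℤ))) (k-1)
    rw [Finset.sum_sub_distrib] at ht
    have ht1 : ∑ j ∈ Finset.range (k-1), γ ^ (-((j+1:ℕ):ℤ)) * E (n + ((j+1:ℕ):ℤ))
        = ∑ j ∈ Finset.range (k-1), γ ^ (-1 - (j:ℤ)) * E (n + 1 + (j:ℤ)) := by
      refine Finset.sum_congr rfl (fun j _ => ?_)
      have e1 : (-((j+1:ℕ):ℤ)) = -1 - (j:ℤ) := by push_cast; ring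
      have e2 : (n + ((j+1:ℕ):ℤ)) = n + 1 + (j:ℤ) := by push_cast; ring
      rw [e1, e2]
    have ht2 : ∑ j ∈ Finset.range (k-1), γ ^ (-(j:ℤ)) * E (n + (j:ℤ))
        = γ * ∑ j ∈ Finset.range (k-1), γ ^ (-1 - (j:ℤ)) * E (n + (j:ℤ)) := by
      rw [Finset.mul_sum]
      refine Finset.sum_congr rfl (fun j _ => ?_)
      have e3 : γ ^ (-(j:ℤ)) = γ * γ ^ (-1 - (j:ℤ)) := by
        rw [show (-(j:ℤ)) = 1 + (-1 - (j:ℤ)) from by ring, zpow_add₀ hγne, zpow_one]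
      rw [e3]; ring
    have ht3 : γ ^ (-((k-1:ℕ):ℤ)) * E (n + ((k-1:ℕ):ℤ)) = P⁻¹ * E (n + k - 1) := by
      rw [zpow_neg, zpow_natCast, ← hP, hcastk1']
      congr 2
      ring
    have ht4 : γ ^ (-((0:ℕ):ℤ)) * E (n + ((0:ℕ):ℤ)) = E n := by norm_num
    rw [ht1, ht2, ht3, ht4] at ht
    exact ht
  -- the telescoped quantity
  set D : ℤ → ℝ := fun n => E (n + k) - ((q:ℝ)+1-γ) * E (n + k - 1)
      - ∑ j ∈ Finset.range (k-1), γ ^ (-1 - (j:ℤ)) * E (n + (j:ℤ)) with hD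
  have hDstep : ∀ n : ℤ, 2 - (k:ℤ) ≤ n → D (n+1) = γ * D n := by
    intro n hn
    simp only [hD]
    rw [show n + 1 + (k:ℤ) - 1 = n + k from by ring,
        show n + 1 + (k:ℤ) = n + k + 1 from by ring]
    linear_combination h4 n hn + E (n + k - 1) * hcoeff - hAB n
  -- F 2 = q
  have hF2 : F 2 = (q:ℝ) := by
    have h := hFrec 2 le_rfl
    rw [show (2:ℤ) - 1 = 1 from by norm_num, hF1] at h
    have hz : ∑ i ∈ Finset.Icc 2 k, F (2 - (i:ℤ)) = 0 :=
      Finset.sum_eq_zero (fun i hi => by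
        simp only [Finset.mem_Icc] at hi
        exact hF0 _ (by omega) (by omega))
    rw [hz] at h
    rw [h]; ring
  -- base case of the telescoped quantity
  have hD0 : D (2 - (k:ℤ)) = 0 := by
    simp only [hD]
    rw [show 2 - (k:ℤ) + k - 1 = 1 from by ring, show 2 - (k:ℤ) + k = 2 from by ring]
    have hsum0 : ∑ j ∈ Finset.range (k-1), γ ^ (-1 - (j:ℤ)) * E (2 - (k:ℤ) + (j:ℤ))
        = -((K - 1) * (c / P)) := by
      have each : ∀ j ∈ Finset.range (k-1),
          γ ^ (-1 - (j:ℤ)) * E (2 - (k:ℤ) + (j:ℤ)) = -(c / P) := by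
        intro j hj
        simp only [Finset.mem_range] at hj
        have hFz : F (2 - (k:ℤ) + (j:ℤ)) = 0 := hF0 _ (by omega) (by omega)
        simp only [hE]
        rw [hFz]
        have hpw : γ ^ (-1 - (j:ℤ)) * γ ^ (2 - (k:ℤ) + (j:ℤ)) = P⁻¹ := by
          rw [hzp, show (-1 - (j:ℤ)) + (2 - (k:ℤ) + (j:ℤ)) = -((k:ℤ)-1) from by ring,
            ← hcastk1', zpow_neg, zpow_natCast, ← hP]
        calc γ ^ (-1 - (j:ℤ)) * (0 - c * γ ^ (2 - (k:ℤ) + (j:ℤ)))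
            = -(c * (γ ^ (-1 - (j:ℤ)) * γ ^ (2 - (k:ℤ) + (j:ℤ)))) := by ring
          _ = -(c / P) := by rw [hpw, div_eq_mul_inv]
      rw [Finset.sum_congr rfl each, Finset.sum_const, Finset.card_range]
      rw [nsmul_eq_mul, hcastk1]
      ring
    rw [hsum0]
    have hE2 : E 2 = (q:ℝ) - c * γ ^ (2:ℤ) := by simp only [hE]; rw [hF2]
    have hE1 : E 1 = 1 - c * γ := by simp only [hE]; rw [hF1, zpow_one]
    rw [hE2, hE1]
    have hγ2 : γ ^ (2:ℤ) = γ * γ := by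
      rw [show (2:ℤ) = 1 + 1 from rfl, zpow_add₀ hγne, zpow_one]
    rw [hγ2]
    field_simp
    linear_combination c * hgdP - P * hggd
  have hDall : ∀ n : ℤ, 2 - (k:ℤ) ≤ n → D n = 0 := by
    intro n
    exact Int.le_induction (motive := fun n _ => D n = 0) hD0 (fun m hm ih => by show D (m+1) = 0; rw [hDstep m hm, ih, mul_zero]) n
  -- the convex-combination recurrence for E
  have hconv : ∀ m : ℤ, 2 ≤ m → E m = ((q:ℝ)+1-γ) * E (m-1)
      + ∑ j ∈ Finset.range (k-1), γ ^ (-1 - (j:ℤ)) * E (m - k + (j:ℤ)) := by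
    intro m hm
    have h := hDall (m - k) (by omega)
    simp only [hD] at h
    rw [show m - (k:ℤ) + k - 1 = m - 1 from by ring, show m - (k:ℤ) + k = m from by ring] at h
    linarith
  -- sum of the weights
  have hwsum : ∑ j ∈ Finset.range (k-1), γ ^ (-1 - (j:ℤ)) = γ - q := by
    have hinv1 : (γ⁻¹ : ℝ) ≠ 1 := by
      rw [ne_eq, inv_eq_one]; exact hγne1
    have each : ∀ j ∈ Finset.range (k-1), γ ^ (-1 - (j:ℤ)) = γ⁻¹ * (γ⁻¹) ^ j := by
      intro j hj
      rw [show (-1 - (j:ℤ)) = -(1 + (j:ℤ)) from by ring, zpow_neg, zpow_add₀ hγne, zpow_one,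
        zpow_natCast, mul_inv, inv_pow]
    rw [Finset.sum_congr rfl each, ← Finset.mul_sum, geom_sum_eq hinv1]
    have hd1 : γ⁻¹ - 1 ≠ 0 := sub_ne_zero.mpr hinv1
    rw [← mul_div_assoc, div_eq_iff hd1]
    have hx : γ⁻¹ * γ = 1 := inv_mul_cancel₀ hγne
    have hxP : (γ⁻¹)^(k-1) * P = 1 := by
      rw [inv_pow, ← hP]; exact inv_mul_cancel₀ hPne
    have hscaled : γ⁻¹ * ((γ⁻¹)^(k-1) - 1) * (γ*P) = (γ - q)*(γ⁻¹ - 1)*(γ*P) := by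
      linear_combination (P*(γ⁻¹)^(k-1) - P - γ*P + (q:ℝ)*P) * hx + hxP + hKI
    exact mul_right_cancel₀ (mul_ne_zero hγne hPne) hscaled
  have hwpos : ∀ j : ℕ, (0:ℝ) ≤ γ ^ (-1 - (j:ℤ)) := fun j => (zpow_pos hγ0 _).le
  have hq1γ : (0:ℝ) ≤ (q:ℝ) + 1 - γ := by linarith
  -- initial bounds
  have hinit : ∀ m : ℤ, 2 - (k:ℤ) ≤ m → m ≤ 1 → |E m| ≤ 1 / q := by
    intro m h1 h2
    rcases lt_or_ge m 1 with hm | hm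
    · have hm0 : m ≤ 0 := by omega
      have hFz : F m = 0 := hF0 m h1 hm0
      have hEm : E m = -(c * γ ^ m) := by simp only [hE]; rw [hFz]; ring
      rw [hEm, abs_neg, abs_of_nonneg (mul_nonneg hg_pos.le (zpow_nonneg hγ0.le m))]
      have hγm : γ ^ m ≤ 1 := zpow_le_one_of_nonpos₀ hγ1.le hm0
      calc c * γ ^ m ≤ c * 1 := mul_le_mul_of_nonneg_left hγm hg_pos.le
        _ = c := mul_one c
        _ ≤ 1 / q := hgval_le
    · have hm1 : m = 1 := le_antisymm h2 hm
      rw [hm1]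
      have hE1 : E 1 = 1 - c * γ := by simp only [hE]; rw [hF1, zpow_one]
      rw [hE1, abs_of_nonneg (by linarith [hgγle])]
      exact h1gγle
  -- main induction
  have hmain : ∀ N : ℤ, 1 ≤ N → ∀ m : ℤ, 2 - (k:ℤ) ≤ m → m ≤ N → |E m| ≤ 1 / q := by
    intro N
    refine Int.le_induction (motive := fun N _ => ∀ m : ℤ, 2 - (k:ℤ) ≤ m → m ≤ N → |E m| ≤ 1 / (q:ℝ)) ?_ ?_ N
    · exact fun m h1 h2 => hinit m h1 h2
    · intro N hN ih m h1 h2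
      rcases le_or_gt m N with h | h
      · exact ih m h1 h
      · have hm2 : 2 ≤ m := by omega
        rw [hconv m hm2]
        have t1 : |E (m-1)| ≤ 1/(q:ℝ) := ih (m-1) (by omega) (by omega)
        have tsum : |∑ j ∈ Finset.range (k-1), γ ^ (-1 - (j:ℤ)) * E (m - k + (j:ℤ))|
            ≤ (γ - q) * (1/(q:ℝ)) := by
          calc |∑ j ∈ Finset.range (k-1), γ ^ (-1 - (j:ℤ)) * E (m - k + (j:ℤ))|
              ≤ ∑ j ∈ Finset.range (k-1), |γ ^ (-1 - (j:ℤ)) * E (m - k + (j:ℤ))| :=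
                Finset.abs_sum_le_sum_abs _ _
            _ ≤ ∑ j ∈ Finset.range (k-1), γ ^ (-1 - (j:ℤ)) * (1/(q:ℝ)) := by
                refine Finset.sum_le_sum (fun j hj => ?_)
                simp only [Finset.mem_range] at hj
                rw [abs_mul, abs_of_nonneg (hwpos j)]
                exact mul_le_mul_of_nonneg_left (ih (m - k + j) (by omega) (by omega)) (hwpos j)
            _ = (γ - q) * (1/(q:ℝ)) := by rw [← Finset.sum_mul, hwsum]
        calc |((q:ℝ)+1-γ) * E (m-1)
              + ∑ j ∈ Finset.range (k-1), γ ^ (-1 - (j:ℤ)) * E (m - k + (j:ℤ))|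
            ≤ |((q:ℝ)+1-γ) * E (m-1)|
              + |∑ j ∈ Finset.range (k-1), γ ^ (-1 - (j:ℤ)) * E (m - k + (j:ℤ))| := abs_add_le _ _
          _ ≤ ((q:ℝ)+1-γ) * (1/(q:ℝ)) + (γ - q) * (1/(q:ℝ)) := by
              rw [abs_mul, abs_of_nonneg hq1γ]
              exact add_le_add (mul_le_mul_of_nonneg_left t1 hq1γ) tsum
          _ = 1 / (q:ℝ) := by ring
  intro n hn
  rcases le_or_gt n 1 with h | h
  · exact hinit n hn h
  · exact hmain n (by omega) n hn le_rfl
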